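/- Let τ > 0, Θ ∈ ℝ^{n×n}, and let μ_1, μ_2 ∈ S (strictly positive probability vectors). Consider the entropy-regularized optimal transport problem min_{M ∈ Π(μ_1, μ_2)} ⟨Θ, M⟩ + τ Σ_{k,l} M_{kl} log M_{kl} (with the convention 0 log 0 = 0). Then a minimizer M̄ exists and is unique; M̄ has strictly positive entries; and there exist vectors v_1, v_2 ∈ ℝ^n with strictly positive entries such that M̄ = Diag(v_1) K Diag(v_2), where K = exp(−Θ/τ) entrywise and Diag(v) is the diagonal matrix with diagonal v. The pair (v_1, v_2) is unique up to replacing (v_1, v_2) by (λv_1, λ^{-1}v_2) for λ > 0. -/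

import Mathlib

open Finset Matrix

noncomputable section

/-- The relative interior `S` of the probability simplex. -/
def Spos (n : ℕ) : Set (Fin n → ℝ) := {p | (∀ k, 0 < p k) ∧ ∑ k, p k = 1}

/-- Coupling matrices Π(p,q) with marginals `p` and `q`. -/
def couplings {n : ℕ} (p q : Fin n → ℝ) : Set (Matrix (Fin n) (Fin n) ℝ) :=
  {M | (∀ k l, 0 ≤ M k l) ∧ (∀ k, ∑ l, M k l = p k) ∧ (∀ l, ∑ k, M k l = q l)}

/-- Frobenius inner product on matrices. -/
def mdot {n : ℕ} (A B : Matrix (Fin n) (Fin n) ℝ) : ℝ := ∑ k, ∑ l, A k l * B k l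

/-- The entropy-regularized transport objective
`⟨Θ, M⟩ + τ Σ_{k,l} M_{kl} log M_{kl}` (with the convention 0·log 0 = 0,
automatic since `Real.log 0 = 0`). -/
def entObj {n : ℕ} (Θ : Matrix (Fin n) (Fin n) ℝ) (τ : ℝ)
    (M : Matrix (Fin n) (Fin n) ℝ) : ℝ :=
  mdot Θ M + τ * ∑ k, ∑ l, M k l * Real.log (M k l)

variable {n : ℕ}

lemma continuous_apply_mat (k l : Fin n) :
    Continuous fun M : Matrix (Fin n) (Fin n) ℝ => M k l :=
  (continuous_apply l).comp (continuous_apply (A := fun _ : Fin n => Fin n → ℝ) k)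

lemma continuous_entObj (Θ : Matrix (Fin n) (Fin n) ℝ) (τ : ℝ) :
    Continuous (entObj Θ τ) := by
  unfold entObj mdot
  refine Continuous.add ?_ (continuous_const.mul ?_) <;>
    refine continuous_finset_sum _ fun k _ => continuous_finset_sum _ fun l _ => ?_
  · exact continuous_const.mul (continuous_apply_mat k l)
  · exact Real.continuous_mul_log.comp (continuous_apply_mat k l)

lemma prod_mem_couplings {μ1 μ2 : Fin n → ℝ} (h1 : μ1 ∈ Spos n) (h2 : μ2 ∈ Spos n) :
    (Matrix.of fun k l => μ1 k * μ2 l) ∈ couplings μ1 μ2 := by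
  refine ⟨fun k l => le_of_lt (mul_pos (h1.1 k) (h2.1 l)), fun k => ?_, fun l => ?_⟩
  · simp [← Finset.mul_sum, h2.2]
  · simp [← Finset.sum_mul, h1.2]

lemma isClosed_couplings (μ1 μ2 : Fin n → ℝ) : IsClosed (couplings μ1 μ2) := by
  have : couplings μ1 μ2 = (⋂ k, ⋂ l, {M : Matrix (Fin n) (Fin n) ℝ | 0 ≤ M k l}) ∩
      ((⋂ k, {M : Matrix (Fin n) (Fin n) ℝ | ∑ l, M k l = μ1 k}) ∩
       (⋂ l, {M : Matrix (Fin n) (Fin n) ℝ | ∑ k, M k l = μ2 l})) := by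
    ext M; simp [couplings, Set.mem_iInter]
  rw [this]
  refine (isClosed_iInter fun k => isClosed_iInter fun l =>
      isClosed_le continuous_const (continuous_apply_mat k l)).inter (IsClosed.inter ?_ ?_)
  · exact isClosed_iInter fun k => isClosed_eq
      (continuous_finset_sum _ fun l _ => continuous_apply_mat k l) continuous_const
  · exact isClosed_iInter fun l => isClosed_eq
      (continuous_finset_sum _ fun k _ => continuous_apply_mat k l) continuous_const

lemma isCompact_couplings {μ1 μ2 : Fin n → ℝ} (h1 : μ1 ∈ Spos n) :
    IsCompact (couplings μ1 μ2) := by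
  have hbig : IsCompact (Set.Icc (fun _ _ => (0:ℝ)) (fun _ _ => (1:ℝ)) : Set (Fin n → Fin n → ℝ)) :=
    isCompact_Icc
  refine hbig.of_isClosed_subset (isClosed_couplings μ1 μ2) ?_
  rintro M ⟨hpos, hrow, _⟩
  have key : ∀ k l, M k l ≤ 1 := by
    intro k l
    have hle : M k l ≤ μ1 k := by
      rw [← hrow k]
      exact Finset.single_le_sum (fun j _ => hpos k j) (Finset.mem_univ l)
    have : μ1 k ≤ 1 := by
      rw [← h1.2]
      exact Finset.single_le_sum (fun j _ => le_of_lt (h1.1 j)) (Finset.mem_univ k)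
    linarith
  exact ⟨fun k l => hpos k l, fun k l => key k l⟩

lemma comb_mem_couplings {μ1 μ2 : Fin n → ℝ} {M P : Matrix (Fin n) (Fin n) ℝ}
    (hM : M ∈ couplings μ1 μ2) (hP : P ∈ couplings μ1 μ2) {t : ℝ} (ht0 : 0 ≤ t) (ht1 : t ≤ 1) :
    (Matrix.of fun k l => (1 - t) * M k l + t * P k l) ∈ couplings μ1 μ2 := by
  refine ⟨fun k l => add_nonneg (mul_nonneg (by linarith) (hM.1 k l))
      (mul_nonneg ht0 (hP.1 k l)), fun k => ?_, fun l => ?_⟩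
  · simp only [Matrix.of_apply, Finset.sum_add_distrib, ← Finset.mul_sum,
      hM.2.1 k, hP.2.1 k]
    ring
  · simp only [Matrix.of_apply, Finset.sum_add_distrib, ← Finset.mul_sum,
      hM.2.2 l, hP.2.2 l]
    ring

lemma sum_sum_add (f g : Fin n → Fin n → ℝ) :
    ∑ k, ∑ l, (f k l + g k l) = (∑ k, ∑ l, f k l) + (∑ k, ∑ l, g k l) := by
  simp [Finset.sum_add_distrib]

lemma sum_sum_mul (c : ℝ) (f : Fin n → Fin n → ℝ) :
    ∑ k, ∑ l, c * f k l = c * ∑ k, ∑ l, f k l := by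
  simp [Finset.mul_sum]

lemma minimizer_pos {τ : ℝ} (hτ : 0 < τ) (Θ : Matrix (Fin n) (Fin n) ℝ)
    {μ1 μ2 : Fin n → ℝ} (h1 : μ1 ∈ Spos n) (h2 : μ2 ∈ Spos n)
    {M : Matrix (Fin n) (Fin n) ℝ} (hM : M ∈ couplings μ1 μ2)
    (hmin : ∀ M' ∈ couplings μ1 μ2, entObj Θ τ M ≤ entObj Θ τ M') :
    ∀ k l, 0 < M k l := by
  by_contra hc
  push_neg at hc
  obtain ⟨k0, l0, h0⟩ := hc
  have hz : M k0 l0 = 0 := le_antisymm h0 (hM.1 k0 l0)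
  set P : Matrix (Fin n) (Fin n) ℝ := Matrix.of fun k l => μ1 k * μ2 l with hPdef
  have hP := prod_mem_couplings h1 h2
  have hp0 : 0 < P k0 l0 := mul_pos (h1.1 k0) (h2.1 l0)
  set C : ℝ := entObj Θ τ P - entObj Θ τ M with hC
  set t : ℝ := min (1/2) (Real.exp (-(|C| + 1) / (τ * P k0 l0))) with htdef
  have ht0 : 0 < t := lt_min (by norm_num) (Real.exp_pos _)
  have ht1 : t ≤ 1/2 := min_le_left _ _
  have hτp : 0 < τ * P k0 l0 := mul_pos hτ hp0
  have hlogt : τ * (P k0 l0 * Real.log t) ≤ -(|C| + 1) := by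
    have hlog : Real.log t ≤ -(|C|+1) / (τ * P k0 l0) := by
      calc Real.log t ≤ Real.log (Real.exp (-(|C|+1)/(τ * P k0 l0))) :=
            Real.log_le_log ht0 (min_le_right _ _)
        _ = _ := Real.log_exp _
    calc τ * (P k0 l0 * Real.log t) ≤ τ * P k0 l0 * (-(|C|+1)/(τ * P k0 l0)) := by
          rw [← mul_assoc]
          exact mul_le_mul_of_nonneg_left hlog hτp.le
      _ = -(|C|+1) := by field_simp
  set Mt := Matrix.of fun k l => (1 - t) * M k l + t * P k l with hMt
  have hMtmem := comb_mem_couplings hM hP ht0.le (by linarith)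
  have key : ∀ k l, Mt k l * Real.log (Mt k l) ≤
      (1 - t) * (M k l * Real.log (M k l)) + t * (P k l * Real.log (P k l)) +
      (if k = k0 ∧ l = l0 then t * P k0 l0 * Real.log t else 0) := by
    intro k l
    by_cases h : k = k0 ∧ l = l0
    · obtain ⟨rfl, rfl⟩ := h
      have hval : Mt k l = t * P k l := by
        simp only [hMt, Matrix.of_apply, hz, mul_zero, zero_add]
      rw [if_pos ⟨rfl, rfl⟩, hval, hz,
        Real.log_mul (ne_of_gt ht0) (ne_of_gt hp0)]
      apply le_of_eq
      ring
    · rw [if_neg h, add_zero]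
      have := Real.convexOn_mul_log.2 (Set.mem_Ici.2 (hM.1 k l)) (Set.mem_Ici.2 (hP.1 k l))
        (by linarith : (0:ℝ) ≤ 1 - t) ht0.le (by ring)
      simpa [smul_eq_mul, hMt, hPdef] using this
  have hsum : ∑ k, ∑ l, Mt k l * Real.log (Mt k l) ≤
      (1 - t) * (∑ k, ∑ l, M k l * Real.log (M k l)) +
      t * (∑ k, ∑ l, P k l * Real.log (P k l)) + t * P k0 l0 * Real.log t := by
    have h1' : ∑ k, ∑ l, Mt k l * Real.log (Mt k l) ≤
        ∑ k, ∑ l, ((1 - t) * (M k l * Real.log (M k l)) + t * (P k l * Real.log (P k l)) +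
          (if k = k0 ∧ l = l0 then t * P k0 l0 * Real.log t else 0)) :=
      Finset.sum_le_sum fun k _ => Finset.sum_le_sum fun l _ => key k l
    have h2' : ∑ k, ∑ l, ((1 - t) * (M k l * Real.log (M k l)) +
          t * (P k l * Real.log (P k l)) +
          (if k = k0 ∧ l = l0 then t * P k0 l0 * Real.log t else 0)) =
        (1 - t) * (∑ k, ∑ l, M k l * Real.log (M k l)) +
        t * (∑ k, ∑ l, P k l * Real.log (P k l)) + t * P k0 l0 * Real.log t := by
      rw [sum_sum_add, sum_sum_add, sum_sum_mul, sum_sum_mul]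
      congr 1
      simp [ite_and, Finset.sum_ite_eq']
    linarith [h1'.trans_eq h2']
  have hmdot : mdot Θ Mt = (1 - t) * mdot Θ M + t * mdot Θ P := by
    unfold mdot
    rw [← sum_sum_mul, ← sum_sum_mul, ← sum_sum_add]
    apply Finset.sum_congr rfl; intro k _
    apply Finset.sum_congr rfl; intro l _
    simp [hMt]; ring
  have hobj : entObj Θ τ Mt ≤ entObj Θ τ M + t * C + τ * (t * (P k0 l0 * Real.log t)) := by
    unfold entObj
    rw [hmdot]
    have := mul_le_mul_of_nonneg_left hsum hτ.le
    unfold entObj at hC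
    nlinarith [this]
  have hfin : entObj Θ τ Mt < entObj Θ τ M := by
    have h3 : τ * (t * (P k0 l0 * Real.log t)) = t * (τ * (P k0 l0 * Real.log t)) := by ring
    have h4 : t * (τ * (P k0 l0 * Real.log t)) ≤ t * (-(|C|+1)) :=
      mul_le_mul_of_nonneg_left hlogt ht0.le
    have h5 : C ≤ |C| := le_abs_self C
    nlinarith
  exact absurd (hmin Mt hMtmem) (not_le.2 hfin)

lemma mdot_comb (Θ M P : Matrix (Fin n) (Fin n) ℝ) (t : ℝ) :
    mdot Θ (Matrix.of fun k l => (1 - t) * M k l + t * P k l) =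
      (1 - t) * mdot Θ M + t * mdot Θ P := by
  unfold mdot
  rw [← sum_sum_mul, ← sum_sum_mul, ← sum_sum_add]
  refine Finset.sum_congr rfl fun k _ => Finset.sum_congr rfl fun l _ => ?_
  simp only [Matrix.of_apply]
  ring

lemma minimizers_eq {τ : ℝ} (hτ : 0 < τ) (Θ : Matrix (Fin n) (Fin n) ℝ)
    {μ1 μ2 : Fin n → ℝ} (h1 : μ1 ∈ Spos n) (h2 : μ2 ∈ Spos n)
    {M M' : Matrix (Fin n) (Fin n) ℝ}
    (hM : M ∈ couplings μ1 μ2) (hM' : M' ∈ couplings μ1 μ2)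
    (hminM : ∀ N ∈ couplings μ1 μ2, entObj Θ τ M ≤ entObj Θ τ N)
    (hminM' : ∀ N ∈ couplings μ1 μ2, entObj Θ τ M' ≤ entObj Θ τ N) : M = M' := by
  by_contra hne
  have heq : entObj Θ τ M = entObj Θ τ M' := le_antisymm (hminM _ hM') (hminM' _ hM)
  obtain ⟨k0, l0, hne0⟩ : ∃ k l, M k l ≠ M' k l := by
    by_contra hall
    push_neg at hall
    exact hne (by ext k l; exact hall k l)
  set N := Matrix.of fun k l => (1 - (1/2:ℝ)) * M k l + (1/2) * M' k l with hN
  have hNmem := comb_mem_couplings hM hM' (by norm_num : (0:ℝ) ≤ 1/2) (by norm_num)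
  have hφ : ∀ k l, N k l * Real.log (N k l) ≤
      (1 - (1/2:ℝ)) * (M k l * Real.log (M k l)) + (1/2) * (M' k l * Real.log (M' k l)) := by
    intro k l
    have := Real.convexOn_mul_log.2 (Set.mem_Ici.2 (hM.1 k l)) (Set.mem_Ici.2 (hM'.1 k l))
      (by norm_num : (0:ℝ) ≤ 1 - 1/2) (by norm_num : (0:ℝ) ≤ 1/2) (by norm_num)
    simpa [hN, smul_eq_mul] using this
  have hφs : N k0 l0 * Real.log (N k0 l0) <
      (1 - (1/2:ℝ)) * (M k0 l0 * Real.log (M k0 l0)) +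
      (1/2) * (M' k0 l0 * Real.log (M' k0 l0)) := by
    have := Real.strictConvexOn_mul_log.2 (Set.mem_Ici.2 (hM.1 k0 l0))
      (Set.mem_Ici.2 (hM'.1 k0 l0)) hne0
      (by norm_num : (0:ℝ) < 1 - 1/2) (by norm_num : (0:ℝ) < 1/2) (by norm_num)
    simpa [hN, smul_eq_mul] using this
  have hsum : ∑ k, ∑ l, N k l * Real.log (N k l) <
      ∑ k, ∑ l, ((1 - (1/2:ℝ)) * (M k l * Real.log (M k l)) +
        (1/2) * (M' k l * Real.log (M' k l))) := by
    have e1 : (∑ k, ∑ l, N k l * Real.log (N k l)) =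
        ∑ p : Fin n × Fin n, N p.1 p.2 * Real.log (N p.1 p.2) :=
      (Fintype.sum_prod_type (f := fun p : Fin n × Fin n =>
        N p.1 p.2 * Real.log (N p.1 p.2))).symm
    have e2 : (∑ k, ∑ l, ((1 - (1/2:ℝ)) * (M k l * Real.log (M k l)) +
          (1/2) * (M' k l * Real.log (M' k l)))) =
        ∑ p : Fin n × Fin n, ((1 - (1/2:ℝ)) * (M p.1 p.2 * Real.log (M p.1 p.2)) +
          (1/2) * (M' p.1 p.2 * Real.log (M' p.1 p.2))) :=
      (Fintype.sum_prod_type (f := fun p : Fin n × Fin n =>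
        (1 - (1/2:ℝ)) * (M p.1 p.2 * Real.log (M p.1 p.2)) +
          (1/2) * (M' p.1 p.2 * Real.log (M' p.1 p.2)))).symm
    rw [e1, e2]
    exact Finset.sum_lt_sum (fun p _ => hφ p.1 p.2) ⟨(k0, l0), Finset.mem_univ _, hφs⟩
  have hmdot : mdot Θ N = (1 - (1/2:ℝ)) * mdot Θ M + (1/2) * mdot Θ M' :=
    mdot_comb Θ M M' (1/2)
  have hENT : entObj Θ τ N < (1/2) * entObj Θ τ M + (1/2) * entObj Θ τ M' := by
    unfold entObj
    rw [hmdot]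
    have h2' : ∑ k, ∑ l, ((1 - (1/2:ℝ)) * (M k l * Real.log (M k l)) +
        (1/2) * (M' k l * Real.log (M' k l))) =
        (1 - (1/2:ℝ)) * (∑ k, ∑ l, M k l * Real.log (M k l)) +
        (1/2) * (∑ k, ∑ l, M' k l * Real.log (M' k l)) := by
      rw [sum_sum_add, sum_sum_mul, sum_sum_mul]
    rw [h2'] at hsum
    nlinarith [mul_lt_mul_of_pos_left hsum hτ]
  have := hminM N hNmem
  rw [heq] at hENT
  linarith [hminM' N hNmem]

lemma sum_sum_sub (f g : Fin n → Fin n → ℝ) :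
    ∑ k, ∑ l, (f k l - g k l) = (∑ k, ∑ l, f k l) - (∑ k, ∑ l, g k l) := by
  simp [Finset.sum_sub_distrib]

lemma sum_ind (a b : Fin n) (F : Fin n → Fin n → ℝ) :
    ∑ x, ∑ y, (if x = a ∧ y = b then (1:ℝ) else 0) * F x y = F a b := by
  simp [ite_and, ite_mul, Finset.sum_ite_eq']

lemma schur_min {τ : ℝ} (hτ : 0 < τ) (Θ : Matrix (Fin n) (Fin n) ℝ)
    {μ1 μ2 : Fin n → ℝ}
    {M : Matrix (Fin n) (Fin n) ℝ} (hM : M ∈ couplings μ1 μ2)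
    (hmin : ∀ N ∈ couplings μ1 μ2, entObj Θ τ M ≤ entObj Θ τ N)
    (hpos : ∀ k l, 0 < M k l) (a a' b b' : Fin n) :
    (Real.log (M a b) + Θ a b / τ) + (Real.log (M a' b') + Θ a' b' / τ)
      = (Real.log (M a b') + Θ a b' / τ) + (Real.log (M a' b) + Θ a' b / τ) := by
  by_cases haa : a = a'
  · subst haa; ring
  by_cases hbb : b = b'
  · subst hbb; ring
  set D : Matrix (Fin n) (Fin n) ℝ := Matrix.of fun x y =>
    (if x = a ∧ y = b then (1:ℝ) else 0) + (if x = a' ∧ y = b' then 1 else 0)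
    - (if x = a ∧ y = b' then 1 else 0) - (if x = a' ∧ y = b then 1 else 0) with hD
  have hDbound : ∀ x y, |D x y| ≤ 4 := by
    intro x y
    simp only [hD, Matrix.of_apply]
    split_ifs <;> norm_num
  have hDrow : ∀ x, ∑ y, D x y = 0 := by
    intro x
    simp only [hD, Matrix.of_apply, ite_and]
    rw [Finset.sum_sub_distrib, Finset.sum_sub_distrib, Finset.sum_add_distrib]
    split_ifs <;> simp [Finset.sum_ite_eq']
  have hDcol : ∀ y, ∑ x, D x y = 0 := by
    intro y
    have : ∀ x, D x y = (if x = a then (if y = b then (1:ℝ) else 0) else 0)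
        + (if x = a' then (if y = b' then (1:ℝ) else 0) else 0)
        - (if x = a then (if y = b' then (1:ℝ) else 0) else 0)
        - (if x = a' then (if y = b then (1:ℝ) else 0) else 0) := by
      intro x
      simp only [hD, Matrix.of_apply, ite_and]
    simp only [this, Finset.sum_sub_distrib, Finset.sum_add_distrib,
      Finset.sum_ite_eq', Finset.mem_univ, if_true]
    split_ifs <;> ring
  have hsumD : ∀ F : Fin n → Fin n → ℝ,
      ∑ x, ∑ y, F x y * D x y = F a b + F a' b' - F a b' - F a' b := by
    intro F
    have hFD : ∀ x y, F x y * D x y =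
        ((if x = a ∧ y = b then (1:ℝ) else 0) * F x y
          + (if x = a' ∧ y = b' then (1:ℝ) else 0) * F x y
          - (if x = a ∧ y = b' then (1:ℝ) else 0) * F x y)
          - (if x = a' ∧ y = b then (1:ℝ) else 0) * F x y := by
      intro x y
      simp only [hD, Matrix.of_apply]
      ring
    simp only [hFD]
    rw [sum_sum_sub, sum_sum_sub, sum_sum_add, sum_ind, sum_ind, sum_ind, sum_ind]
  -- the minimum entry
  set ε : ℝ := Finset.univ.inf' ⟨(a, b), Finset.mem_univ _⟩
      (fun p : Fin n × Fin n => M p.1 p.2) with hε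
  have hεpos : 0 < ε := by
    rw [hε]
    exact (Finset.lt_inf'_iff _).2 fun p _ => hpos p.1 p.2
  have hεle : ∀ x y, ε ≤ M x y := fun x y =>
    Finset.inf'_le _ (Finset.mem_univ (x, y))
  -- feasibility for small t
  have hfeas : ∀ t : ℝ, |t| ≤ ε / 4 →
      (Matrix.of fun x y => M x y + t * D x y) ∈ couplings μ1 μ2 := by
    intro t ht
    refine ⟨fun x y => ?_, fun x => ?_, fun y => ?_⟩
    · have h1' : |t * D x y| ≤ ε := by
        rw [abs_mul]
        calc |t| * |D x y| ≤ (ε/4) * 4 :=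
              mul_le_mul ht (hDbound x y) (abs_nonneg _) (by positivity)
          _ = ε := by ring
      have := neg_abs_le (t * D x y)
      have := hεle x y
      simp only [Matrix.of_apply]
      linarith
    · simp only [Matrix.of_apply, Finset.sum_add_distrib, ← Finset.mul_sum,
        hDrow x, mul_zero, add_zero]
      exact hM.2.1 x
    · simp only [Matrix.of_apply, Finset.sum_add_distrib, ← Finset.mul_sum,
        hDcol y, mul_zero, add_zero]
      exact hM.2.2 y
  -- the one-dimensional function
  set g : ℝ → ℝ := fun t => entObj Θ τ (Matrix.of fun x y => M x y + t * D x y) with hg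
  have hg0 : g 0 = entObj Θ τ M := by
    have : (Matrix.of fun x y => M x y + (0:ℝ) * D x y) = M := by
      ext x y; simp
    rw [hg]; simp only; rw [this]
  have hlocal : IsLocalMin g 0 := by
    have hev : ∀ᶠ t in nhds (0:ℝ), g 0 ≤ g t := by
      filter_upwards [Metric.ball_mem_nhds (0:ℝ) (by positivity : (0:ℝ) < ε/4)] with t ht
      rw [hg0]
      refine hmin _ (hfeas t ?_)
      rw [Metric.mem_ball, Real.dist_eq, sub_zero] at ht
      exact ht.le
    exact hev
  -- derivative of g at 0
  have haff : ∀ x y : Fin n, HasDerivAt (fun t : ℝ => M x y + t * D x y) (D x y) 0 :=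
    fun x y => (hasDerivAt_mul_const (D x y)).const_add (M x y)
  have hderiv : HasDerivAt g ((∑ x, ∑ y, Θ x y * D x y) +
      τ * ∑ x, ∑ y, (Real.log (M x y) + 1) * D x y) 0 := by
    have hpart1 : HasDerivAt (fun t : ℝ => ∑ x, ∑ y, Θ x y * (M x y + t * D x y))
        (∑ x, ∑ y, Θ x y * D x y) 0 := by
      refine HasDerivAt.fun_sum fun x _ => HasDerivAt.fun_sum fun y _ => ?_
      exact (haff x y).const_mul (Θ x y)
    have hpart2 : HasDerivAt
        (fun t : ℝ => ∑ x, ∑ y, (M x y + t * D x y) * Real.log (M x y + t * D x y))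
        (∑ x, ∑ y, (Real.log (M x y) + 1) * D x y) 0 := by
      refine HasDerivAt.fun_sum fun x _ => HasDerivAt.fun_sum fun y _ => ?_
      have h00 : M x y + (0:ℝ) * D x y = M x y := by ring
      have hout : HasDerivAt (fun u : ℝ => u * Real.log u)
          (Real.log (M x y + (0:ℝ) * D x y) + 1) (M x y + (0:ℝ) * D x y) :=
        Real.hasDerivAt_mul_log (by rw [h00]; exact (hpos x y).ne')
      have key := hout.comp 0 (haff x y)
      rw [h00] at key
      exact key
    have := hpart1.add (hpart2.const_mul τ)
    rw [hg]
    unfold entObj mdot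
    simp only [Matrix.of_apply]
    exact this
  have hL0 : (∑ x, ∑ y, Θ x y * D x y) +
      τ * ∑ x, ∑ y, (Real.log (M x y) + 1) * D x y = 0 := by
    rw [← hderiv.deriv]
    exact hlocal.deriv_eq_zero
  have hθ : ∑ x, ∑ y, Θ x y * D x y = Θ a b + Θ a' b' - Θ a b' - Θ a' b := hsumD Θ
  have hlog : ∑ x, ∑ y, (Real.log (M x y) + 1) * D x y =
      (Real.log (M a b) + 1) + (Real.log (M a' b') + 1)
      - (Real.log (M a b') + 1) - (Real.log (M a' b) + 1) :=
    hsumD (fun x y => Real.log (M x y) + 1)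
  rw [hθ, hlog] at hL0
  have hτ' : τ ≠ 0 := hτ.ne'
  field_simp
  nlinarith [hL0]

theorem stmt17 (n : ℕ) (τ : ℝ) (hτ : 0 < τ) (Θ : Matrix (Fin n) (Fin n) ℝ)
    (μ1 μ2 : Fin n → ℝ) (h1 : μ1 ∈ Spos n) (h2 : μ2 ∈ Spos n) :
    ∃ Mbar ∈ couplings μ1 μ2,
      -- M̄ is a minimizer:
      (∀ M ∈ couplings μ1 μ2, entObj Θ τ Mbar ≤ entObj Θ τ M) ∧
      -- the minimizer is unique:
      (∀ M ∈ couplings μ1 μ2,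
        (∀ M' ∈ couplings μ1 μ2, entObj Θ τ M ≤ entObj Θ τ M') → M = Mbar) ∧
      -- M̄ has strictly positive entries:
      (∀ k l, 0 < Mbar k l) ∧
      -- diagonal scaling representation M̄ = Diag(v₁) K Diag(v₂), K = exp(−Θ/τ):
      ∃ v1 v2 : Fin n → ℝ, (∀ k, 0 < v1 k) ∧ (∀ k, 0 < v2 k) ∧
        Mbar = Matrix.diagonal v1 * (Matrix.of fun k l => Real.exp (-Θ k l / τ)) *
          Matrix.diagonal v2 ∧
        -- (v₁, v₂) is unique up to (λv₁, λ⁻¹v₂), λ > 0: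
        ∀ w1 w2 : Fin n → ℝ, (∀ k, 0 < w1 k) → (∀ k, 0 < w2 k) →
          Mbar = Matrix.diagonal w1 * (Matrix.of fun k l => Real.exp (-Θ k l / τ)) *
            Matrix.diagonal w2 →
          ∃ lam : ℝ, 0 < lam ∧ w1 = (fun k => lam * v1 k) ∧ w2 = fun k => v2 k / lam := by
  obtain ⟨i0⟩ : Nonempty (Fin n) := by
    rcases Nat.eq_zero_or_pos n with h | h
    · exfalso; subst h; simpa using h1.2
    · exact ⟨⟨0, h⟩⟩
  obtain ⟨Mbar, hMbarmem, hmin'⟩ := (isCompact_couplings h1).exists_isMinOn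
    ⟨_, prod_mem_couplings h1 h2⟩ (continuous_entObj Θ τ).continuousOn
  have hmin : ∀ M ∈ couplings μ1 μ2, entObj Θ τ Mbar ≤ entObj Θ τ M :=
    fun M hM => hmin' hM
  have hpos := minimizer_pos hτ Θ h1 h2 hMbarmem hmin
  refine ⟨Mbar, hMbarmem, hmin,
    fun M hM hMmin => minimizers_eq hτ Θ h1 h2 hM hMbarmem hMmin hmin, hpos, ?_⟩
  have hschur := schur_min hτ Θ hMbarmem hmin hpos
  set v1 : Fin n → ℝ := fun k => Real.exp (Real.log (Mbar k i0) + Θ k i0 / τ) with hv1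
  set v2 : Fin n → ℝ := fun l => Real.exp ((Real.log (Mbar i0 l) + Θ i0 l / τ)
      - (Real.log (Mbar i0 i0) + Θ i0 i0 / τ)) with hv2
  have hv1pos : ∀ k, 0 < v1 k := fun k => Real.exp_pos _
  have hv2pos : ∀ l, 0 < v2 l := fun l => Real.exp_pos _
  have hrep : ∀ k l, Mbar k l = v1 k * Real.exp (-Θ k l / τ) * v2 l := by
    intro k l
    have h := hschur k i0 l i0
    rw [hv1, hv2]
    rw [← Real.exp_add, ← Real.exp_add, ← Real.exp_log (hpos k l)]
    congr 1
    rw [neg_div]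
    linarith
  have hmat : Mbar = Matrix.diagonal v1 * (Matrix.of fun k l => Real.exp (-Θ k l / τ)) *
      Matrix.diagonal v2 := by
    ext k l
    rw [Matrix.mul_diagonal, Matrix.diagonal_mul, Matrix.of_apply]
    exact hrep k l
  refine ⟨v1, v2, hv1pos, hv2pos, hmat, ?_⟩
  intro w1 w2 hw1 hw2 hmat'
  have hent : ∀ k l, w1 k * w2 l = v1 k * v2 l := by
    intro k l
    have e1 : Mbar k l = w1 k * Real.exp (-Θ k l / τ) * w2 l := by
      rw [hmat']
      rw [Matrix.mul_diagonal, Matrix.diagonal_mul, Matrix.of_apply]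
    have e2 := hrep k l
    have hK : Real.exp (-Θ k l / τ) ≠ 0 := (Real.exp_pos _).ne'
    have h3 : Real.exp (-Θ k l / τ) * (w1 k * w2 l) =
        Real.exp (-Θ k l / τ) * (v1 k * v2 l) := by
      linear_combination e2 - e1
    exact mul_left_cancel₀ hK h3
  refine ⟨w1 i0 / v1 i0, div_pos (hw1 i0) (hv1pos i0), ?_, ?_⟩
  · funext k
    have ha := hent k i0
    have hb := hent i0 i0
    have hw2i : w2 i0 ≠ 0 := (hw2 i0).ne'
    have hv1i : v1 i0 ≠ 0 := (hv1pos i0).ne'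
    rw [div_mul_eq_mul_div, eq_div_iff hv1i]
    have : w1 k * v1 i0 * w2 i0 = w1 i0 * v1 k * w2 i0 := by
      linear_combination v1 i0 * ha - v1 k * hb
    exact mul_right_cancel₀ hw2i this
  · funext l
    have ha := hent i0 l
    have hw1i : w1 i0 ≠ 0 := (hw1 i0).ne'
    have hv1i : v1 i0 ≠ 0 := (hv1pos i0).ne'
    rw [div_div_eq_mul_div, eq_div_iff hw1i]
    linear_combination ha
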